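/- Fix an integer capacity u ≥ 1 and a positive integer ℓ. Let F and C be finite sets of points in a metric space (X, d), let x : F × C → ℝ≥0 satisfy Σ_{i∈F} x_{i,j} = 1 for every j ∈ C, let y : F → ℝ≥0, and set d_av(j) = Σ_{i∈F} x_{i,j}·d(i,j). Let C* be a finite set of points and {U_v}_{v∈C*} a partition of F such that: (i) for every v ∈ C* and i ∈ U_v, d(i, v) = min_{w∈C*} d(i, w); and (ii) for every v ∈ C*, i ∈ U_v and j ∈ C, d(i, v) ≤ d(i, j) + 2ℓ·d_av(j). Let ∅ ⊊ A ⊊ C*, set S = ∪_{v∈A} U_v, and define y_S = Σ_{i∈S} y_i, y'_S = (Σ_{i∈S} Σ_{j∈C} x_{i,j})/u, D_S = Σ_{i∈S} Σ_{j∈C} x_{i,j}·d(i,j), and D'_S = Σ_{i∈S} Σ_{j∈C} x_{i,j}·d_av(j). Suppose y'_S ≥ ⌊y_S⌋ and, for every J ⊆ C, Σ_{j∈J} Σ_{i∈S} x_{i,j} ≤ f(|J|, y_S). Then {y'_S}·(⌈y_S⌉ − y_S)·d(A, C*∖A) ≤ (4/u)·D_S + ((4ℓ+2)/u)·D'_S,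 where d(A, C*∖A) = min_{v∈A, v'∈C*∖A} d(v, v') and {y'_S} = y'_S − ⌊y'_S⌋. -/

import Mathlib

/-- The function `f(p, q)` from Section 3 of the paper, for capacity `u`:
`f(p,q) = qu` if `q ≤ ⌊p/u⌋`;
`f(p,q) = u⌊p/u⌋ + u·{p/u}·(q − ⌊p/u⌋)` if `⌊p/u⌋ < q < ⌈p/u⌉`;
`f(p,q) = p` if `q ≥ ⌈p/u⌉`. -/
noncomputable def f (u : ℕ) (p : ℕ) (q : ℝ) : ℝ :=
  if q ≤ (⌊(p : ℝ) / (u : ℝ)⌋ : ℝ) then q * u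
  else if q < (⌈(p : ℝ) / (u : ℝ)⌉ : ℝ) then
    (u : ℝ) * (⌊(p : ℝ) / (u : ℝ)⌋ : ℝ)
      + (u : ℝ) * Int.fract ((p : ℝ) / (u : ℝ)) * (q - (⌊(p : ℝ) / (u : ℝ)⌋ : ℝ))
  else (p : ℝ)

lemma f_le_aux (u p : ℕ) (hu : 1 ≤ u) (q : ℝ) :
    f u p q ≤ (⌊q⌋ : ℝ) * u + Int.fract q * ((p : ℝ) - (⌊q⌋ : ℝ) * u) := by
  have hu0 : (0:ℝ) < u := by exact_mod_cast hu
  have hfr0 : 0 ≤ Int.fract q := Int.fract_nonneg q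
  have hfr1 : Int.fract q < 1 := Int.fract_lt_one q
  have hfq : Int.fract q = q - (⌊q⌋:ℝ) := rfl
  have hfloorle : ((⌊(p:ℝ)/(u:ℝ)⌋ : ℝ)) ≤ (p:ℝ)/(u:ℝ) := Int.floor_le _
  have hkd : (⌊(p:ℝ)/(u:ℝ)⌋ : ℝ) * u ≤ p := by
    have := mul_le_mul_of_nonneg_right hfloorle (le_of_lt hu0)
    rwa [div_mul_cancel₀] at this
    exact ne_of_gt hu0
  unfold f
  split_ifs with h1 h2
  · rcases eq_or_lt_of_le hfr0 with h0 | h0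
    · have hq : q = (⌊q⌋:ℝ) := by rw [hfq] at h0; linarith
      rw [← h0, zero_mul, add_zero]
      nlinarith [hq]
    · have hql : (⌊q⌋:ℝ) < q := by rw [hfq] at h0; linarith
      have hceil : (⌈q⌉ : ℤ) ≤ ⌊(p:ℝ)/(u:ℝ)⌋ := Int.ceil_le.mpr h1
      have hlt : (⌊q⌋ : ℤ) < ⌈q⌉ := by
        have : (⌊q⌋:ℝ) < (⌈q⌉:ℝ) := lt_of_lt_of_le hql (Int.le_ceil q)
        exact_mod_cast this
      have h1' : (⌊q⌋:ℤ) + 1 ≤ ⌊(p:ℝ)/(u:ℝ)⌋ := by omega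
      have h1'' : ((⌊q⌋:ℝ) + 1) * u ≤ (p:ℝ) := by
        have : ((⌊q⌋:ℝ) + 1) ≤ (⌊(p:ℝ)/(u:ℝ)⌋ : ℝ) := by exact_mod_cast h1'
        nlinarith
      nlinarith [hfq]
  · push_neg at h1
    have hceil1 : (⌈(p:ℝ)/(u:ℝ)⌉ : ℤ) ≤ ⌊(p:ℝ)/(u:ℝ)⌋ + 1 := Int.ceil_le_floor_add_one _
    have hql : q < (⌊(p:ℝ)/(u:ℝ)⌋ : ℝ) + 1 := by
      have : (⌈(p:ℝ)/(u:ℝ)⌉ : ℝ) ≤ (⌊(p:ℝ)/(u:ℝ)⌋ : ℝ) + 1 := by exact_mod_cast hceil1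
      linarith
    have hfl : ⌊q⌋ = ⌊(p:ℝ)/(u:ℝ)⌋ := by
      rw [Int.floor_eq_iff]
      · exact ⟨le_of_lt h1, hql⟩
    have hup : (u:ℝ) * Int.fract ((p:ℝ)/(u:ℝ)) = (p:ℝ) - (⌊(p:ℝ)/(u:ℝ)⌋:ℝ) * u := by
      rw [Int.fract]
      field_simp
    apply le_of_eq
    rw [hfl, hfq, hfl]
    linear_combination (q - (⌊(p:ℝ)/(u:ℝ)⌋:ℝ)) * hup
  · push_neg at h2
    have : (⌈(p:ℝ)/(u:ℝ)⌉ : ℤ) ≤ ⌊q⌋ := Int.le_floor.mpr h2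
    have hpu : (p:ℝ)/(u:ℝ) ≤ (⌊q⌋:ℝ) := le_trans (Int.le_ceil _) (by exact_mod_cast this)
    have hpmu : (p:ℝ) ≤ (⌊q⌋:ℝ) * u := by
      have := mul_le_mul_of_nonneg_right hpu (le_of_lt hu0)
      rwa [div_mul_cancel₀] at this
      exact ne_of_gt hu0
    nlinarith

lemma sum_lin {X : Type} (s : Finset X) (g h : X → ℝ) (K c : ℝ) :
    ∑ i ∈ s, g i * (K + c * h i) = K * (∑ i ∈ s, g i) + c * ∑ i ∈ s, g i * h i := by
  rw [Finset.mul_sum, Finset.mul_sum, ← Finset.sum_add_distrib]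
  exact Finset.sum_congr rfl (fun i _ => by ring)


set_option maxHeartbeats 2000000 in
/-- **Lemma 4.2.** With the Voronoi partition `{U v}_{v∈Cs}` of `F` with centers the
representatives `Cs`, for a set `∅ ⊊ A ⊊ Cs` with `S = ∪_{v∈A} U v`, if `y'_S ≥ ⌊y_S⌋`
and the rectangle constraint holds for `B = S` and every `J ⊆ C`, then
`{y'_S}·(⌈y_S⌉ − y_S)·d(A, Cs∖A) ≤ (4/u)·D_S + ((4ℓ+2)/u)·D'_S`. -/
theorem stmt12 (X : Type) [PseudoMetricSpace X] [DecidableEq X]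
    (u : ℕ) (hu : 1 ≤ u) (ℓ : ℕ) (hℓ : 0 < ℓ)
    (F C : Finset X) (x : X → X → ℝ) (y : X → ℝ)
    (hx0 : ∀ i ∈ F, ∀ j ∈ C, 0 ≤ x i j)
    (hy0 : ∀ i ∈ F, 0 ≤ y i)
    (hsum : ∀ j ∈ C, ∑ i ∈ F, x i j = 1)
    (dav : X → ℝ) (hdav : ∀ j ∈ C, dav j = ∑ i ∈ F, x i j * dist i j)
    (Cs : Finset X) (U : X → Finset X)
    (hUsub : ∀ v ∈ Cs, U v ⊆ F)
    (hdisj : ∀ v ∈ Cs, ∀ v' ∈ Cs, v ≠ v' → ∀ i, i ∈ U v → i ∉ U v')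
    (hcover : ∀ i ∈ F, ∃ v ∈ Cs, i ∈ U v)
    (hnear : ∀ v ∈ Cs, ∀ i ∈ U v, ∀ w ∈ Cs, dist i v ≤ dist i w)
    (hC4 : ∀ v ∈ Cs, ∀ i ∈ U v, ∀ j ∈ C, dist i v ≤ dist i j + 2 * (ℓ : ℝ) * dav j)
    (A : Finset X) (hA : A.Nonempty) (hAsub : A ⊆ Cs) (hAne : A ≠ Cs)
    (S : Finset X) (hS : S = A.biUnion U)
    (yS y'S DS D'S : ℝ)
    (hyS : yS = ∑ i ∈ S, y i)
    (hy'S : y'S = (∑ i ∈ S, ∑ j ∈ C, x i j) / u)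
    (hDS : DS = ∑ i ∈ S, ∑ j ∈ C, x i j * dist i j)
    (hD'S : D'S = ∑ i ∈ S, ∑ j ∈ C, x i j * dav j)
    (hfloor : (⌊yS⌋ : ℝ) ≤ y'S)
    (hrect : ∀ J : Finset X, J ⊆ C → ∑ j ∈ J, ∑ i ∈ S, x i j ≤ f u J.card yS)
    (dA : ℝ)
    (hdA : IsLeast { t : ℝ | ∃ v ∈ A, ∃ v' ∈ Cs \ A, t = dist v v' } dA) :
    Int.fract y'S * ((⌈yS⌉ : ℝ) - yS) * dA ≤
      4 / (u : ℝ) * DS + (4 * (ℓ : ℝ) + 2) / (u : ℝ) * D'S := by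
  classical
  have hu0 : (0:ℝ) < u := by exact_mod_cast hu
  have hl0 : (0:ℝ) ≤ (ℓ:ℝ) := by positivity
  set a : X → ℝ := fun j => ∑ i ∈ S, x i j with ha
  have haj : ∀ j, a j = ∑ i ∈ S, x i j := fun j => by rw [ha]
  have hSF : S ⊆ F := by
    rw [hS]; intro i hi
    rcases Finset.mem_biUnion.mp hi with ⟨v, hv, hiv⟩
    exact hUsub v (hAsub hv) hiv
  have hxS0 : ∀ j ∈ C, ∀ i ∈ S, 0 ≤ x i j := fun j hj i hi => hx0 i (hSF hi) j hj
  have ha0 : ∀ j ∈ C, 0 ≤ a j := fun j hj => Finset.sum_nonneg (fun i hi => hxS0 j hj i hi)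
  have hb : ∀ j ∈ C, ∑ i ∈ F \ S, x i j = 1 - a j := by
    intro j hj
    have h := Finset.sum_sdiff (f := fun i => x i j) hSF
    rw [hsum j hj] at h
    rw [← haj j] at h
    linarith
  have ha1 : ∀ j ∈ C, a j ≤ 1 := by
    intro j hj
    have h := hb j hj
    have h2 : (0:ℝ) ≤ ∑ i ∈ F \ S, x i j :=
      Finset.sum_nonneg (fun i hi => hx0 i (Finset.mem_sdiff.mp hi).1 j hj)
    linarith
  have hdav0 : ∀ j ∈ C, 0 ≤ dav j := by
    intro j hj
    rw [hdav j hj]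
    exact Finset.sum_nonneg (fun i hi => mul_nonneg (hx0 i hi j hj) dist_nonneg)
  have hT : ∑ j ∈ C, a j = u * y'S := by
    rw [hy'S, mul_div_cancel₀ _ (ne_of_gt hu0)]
    rw [Finset.sum_comm]
  have hdA0 : 0 ≤ dA := by
    obtain ⟨v, _, v', _, hd⟩ := hdA.1
    rw [hd]; exact dist_nonneg
  -- pointwise geometric inequality
  have hpt : ∀ j ∈ C, ∀ i ∈ S, ∀ i' ∈ F \ S,
      dA ≤ 4 * dist i j + 4 * (ℓ:ℝ) * dav j + 2 * dist i' j := by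
    intro j hj i hi i' hi'
    rw [hS] at hi
    rcases Finset.mem_biUnion.mp hi with ⟨v, hvA, hiv⟩
    rcases Finset.mem_sdiff.mp hi' with ⟨hi'F, hi'S⟩
    rcases hcover i' hi'F with ⟨v', hv'Cs, hi'v'⟩
    have hv'A : v' ∉ A := fun h => hi'S (hS ▸ Finset.mem_biUnion.mpr ⟨v', h, hi'v'⟩)
    have h0 : dA ≤ dist v v' := hdA.2 ⟨v, hvA, v', Finset.mem_sdiff.mpr ⟨hv'Cs, hv'A⟩, rfl⟩
    have t1 : dist v v' ≤ dist v i + dist i v' := dist_triangle _ _ _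
    have t2 : dist i v' ≤ dist i j + dist j v' := dist_triangle _ _ _
    have t3 : dist j v' ≤ dist j i' + dist i' v' := dist_triangle _ _ _
    have t4 : dist i' v' ≤ dist i' v := hnear v' hv'Cs i' hi'v' v (hAsub hvA)
    have t5 : dist i' v ≤ dist i' j + dist j v := dist_triangle _ _ _
    have t6 : dist j v ≤ dist j i + dist i v := dist_triangle _ _ _
    have t7 : dist i v ≤ dist i j + 2 * (ℓ:ℝ) * dav j := hC4 v (hAsub hvA) i hiv j hj
    have c1 : dist v i = dist i v := dist_comm _ _
    have c2 : dist j i' = dist i' j := dist_comm _ _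
    have c3 : dist j i = dist i j := dist_comm _ _
    linarith
  -- per-client inequality
  have hper : ∀ j ∈ C, a j * (1 - a j) * dA ≤
      4 * (∑ i ∈ S, x i j * dist i j) + (4 * (ℓ:ℝ) + 2) * (a j * dav j) := by
    intro j hj
    set ej := ∑ i' ∈ F \ S, x i' j * dist i' j with hejdef
    have hej0 : 0 ≤ ej :=
      Finset.sum_nonneg (fun i hi => mul_nonneg (hx0 i (Finset.mem_sdiff.mp hi).1 j hj) dist_nonneg)
    have hejD : ej ≤ dav j := by
      rw [hdav j hj]
      exact Finset.sum_le_sum_of_subset_of_nonneg (Finset.sdiff_subset)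
        (fun i hiF _ => mul_nonneg (hx0 i hiF j hj) dist_nonneg)
    have hcj0 : 0 ≤ ∑ i ∈ S, x i j * dist i j :=
      Finset.sum_nonneg (fun i hi => mul_nonneg (hxS0 j hj i hi) dist_nonneg)
    have step1 : ∀ i ∈ S, (1 - a j) * dA ≤
        (4 * dist i j + 4 * (ℓ:ℝ) * dav j) * (1 - a j) + 2 * ej := by
      intro i hi
      have e1 : (1 - a j) * dA = ∑ i' ∈ F \ S, x i' j * dA := by
        rw [← hb j hj, Finset.sum_mul]
      have e2 : ∑ i' ∈ F \ S, x i' j * dA ≤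
          ∑ i' ∈ F \ S, x i' j * ((4 * dist i j + 4 * (ℓ:ℝ) * dav j) + 2 * dist i' j) :=
        Finset.sum_le_sum (fun i' hi' => mul_le_mul_of_nonneg_left
          (by have := hpt j hj i hi i' hi'; linarith)
          (hx0 i' (Finset.mem_sdiff.mp hi').1 j hj))
      have e3 : ∑ i' ∈ F \ S, x i' j * ((4 * dist i j + 4 * (ℓ:ℝ) * dav j) + 2 * dist i' j)
          = (4 * dist i j + 4 * (ℓ:ℝ) * dav j) * (∑ i' ∈ F \ S, x i' j) + 2 * ej :=
        sum_lin (F \ S) (fun i' => x i' j) (fun i' => dist i' j) _ 2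
      rw [e1]
      rw [e3] at e2
      rw [hb j hj] at e2
      exact e2
    have step2 : a j * ((1 - a j) * dA) ≤
        ∑ i ∈ S, x i j * ((4 * dist i j + 4 * (ℓ:ℝ) * dav j) * (1 - a j) + 2 * ej) := by
      have e : a j * ((1 - a j) * dA) = ∑ i ∈ S, x i j * ((1 - a j) * dA) := by
        rw [haj j, Finset.sum_mul]
      rw [e]
      exact Finset.sum_le_sum (fun i hi => mul_le_mul_of_nonneg_left (step1 i hi) (hxS0 j hj i hi))
    have step3 : ∑ i ∈ S, x i j * ((4 * dist i j + 4 * (ℓ:ℝ) * dav j) * (1 - a j) + 2 * ej)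
        = ((4 * (ℓ:ℝ) * dav j) * (1 - a j) + 2 * ej) * a j
          + (4 * (1 - a j)) * ∑ i ∈ S, x i j * dist i j := by
      have e : ∑ i ∈ S, x i j * ((4 * dist i j + 4 * (ℓ:ℝ) * dav j) * (1 - a j) + 2 * ej)
          = ∑ i ∈ S, x i j * (((4 * (ℓ:ℝ) * dav j) * (1 - a j) + 2 * ej)
            + (4 * (1 - a j)) * dist i j) :=
        Finset.sum_congr rfl (fun i _ => by ring)
      rw [e, sum_lin S (fun i => x i j) (fun i => dist i j) _ _, ← haj j]
    rw [step3] at step2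
    have haj0 := ha0 j hj
    have haj1 := ha1 j hj
    have hD0 := hdav0 j hj
    nlinarith [mul_nonneg haj0 hcj0, mul_nonneg (mul_nonneg haj0 haj0) hD0,
      mul_le_mul_of_nonneg_left hejD haj0, mul_nonneg haj0 hej0,
      mul_nonneg (mul_nonneg (mul_nonneg hl0 haj0) haj0) hD0]
  -- summed distance inequality
  have hDSj : DS = ∑ j ∈ C, ∑ i ∈ S, x i j * dist i j := by rw [hDS]; exact Finset.sum_comm
  have hD'Sj : D'S = ∑ j ∈ C, a j * dav j := by
    rw [hD'S, Finset.sum_comm]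
    exact Finset.sum_congr rfl (fun j _ => by rw [haj j, Finset.sum_mul])
  have key1 : (∑ j ∈ C, a j * (1 - a j)) * dA ≤ 4 * DS + (4 * (ℓ:ℝ) + 2) * D'S := by
    rw [Finset.sum_mul]
    calc ∑ j ∈ C, a j * (1 - a j) * dA
        ≤ ∑ j ∈ C, (4 * (∑ i ∈ S, x i j * dist i j) + (4 * (ℓ:ℝ) + 2) * (a j * dav j)) :=
          Finset.sum_le_sum hper
      _ = 4 * DS + (4 * (ℓ:ℝ) + 2) * D'S := by
          rw [Finset.sum_add_distrib, ← Finset.mul_sum, ← Finset.mul_sum, hDSj, hD'Sj]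
  -- counting inequality
  have key2 : (u:ℝ) * (Int.fract y'S * ((⌈yS⌉:ℝ) - yS)) ≤ ∑ j ∈ C, a j * (1 - a j) := by
    obtain ⟨s, hsdef⟩ : ∃ t : ℝ, Int.fract yS = t := ⟨_, rfl⟩
    obtain ⟨m, hmdef⟩ : ∃ t : ℝ, ((⌊yS⌋ : ℝ)) = t := ⟨_, rfl⟩
    have hs0 : 0 ≤ s := hsdef ▸ Int.fract_nonneg yS
    have hs1 : s < 1 := hsdef ▸ Int.fract_lt_one yS
    have hsm : s = yS - m := by rw [← hsdef, ← hmdef, Int.fract]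
    set J1 := C.filter (fun j => s < a j) with hJ1
    obtain ⟨p1, hp1⟩ : ∃ t : ℝ, (J1.card : ℝ) = t := ⟨_, rfl⟩
    obtain ⟨A1, hA1⟩ : ∃ t : ℝ, ∑ j ∈ J1, a j = t := ⟨_, rfl⟩
    obtain ⟨T, hTd⟩ : ∃ t : ℝ, ∑ j ∈ C, a j = t := ⟨_, rfl⟩
    have hJ1C : J1 ⊆ C := Finset.filter_subset _ _
    have hrect1 : A1 ≤ m * u + s * (p1 - m * u) := by
      have h := hrect J1 hJ1C
      have h2 := f_le_aux u J1.card hu yS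
      rw [hsdef, hmdef, hp1] at h2
      rw [← hA1]
      calc ∑ j ∈ J1, a j = ∑ j ∈ J1, ∑ i ∈ S, x i j :=
            Finset.sum_congr rfl (fun j _ => haj j)
        _ ≤ _ := le_trans h h2
    have hsplit : A1 + ∑ j ∈ C.filter (fun j => ¬ s < a j), a j = T := by
      rw [← hA1, ← hTd]
      exact Finset.sum_filter_add_sum_filter_not C _ a
    have e1 : ∑ j ∈ J1, s * (1 - a j) = s * (p1 - A1) := by
      have h : ∑ j ∈ J1, (1 - a j) = p1 - A1 := by
        rw [Finset.sum_sub_distrib, Finset.sum_const, nsmul_eq_mul, mul_one, hp1, hA1]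
      rw [← Finset.mul_sum, h]
    have e2 : ∑ j ∈ C.filter (fun j => ¬ s < a j), (1 - s) * a j = (1 - s) * (T - A1) := by
      rw [← Finset.mul_sum]
      congr 1
      linarith [hsplit]
    have hlow : s * (p1 - A1) + (1 - s) * (T - A1) ≤ ∑ j ∈ C, a j * (1 - a j) := by
      rw [← Finset.sum_filter_add_sum_filter_not C (fun j => s < a j) (fun j => a j * (1 - a j)),
        ← e1, ← e2]
      apply add_le_add
      · apply Finset.sum_le_sum
        intro j hj
        have hjC := hJ1C hj
        have hsa : s < a j := (Finset.mem_filter.mp hj).2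
        have := ha1 j hjC
        nlinarith
      · apply Finset.sum_le_sum
        intro j hj
        have hjC : j ∈ C := (Finset.mem_filter.mp hj).1
        have hsa : ¬ s < a j := (Finset.mem_filter.mp hj).2
        push_neg at hsa
        have := ha0 j hjC
        nlinarith
    have hfr' : Int.fract y'S ≤ y'S - m := by
      have h1 : (⌊yS⌋ : ℤ) ≤ ⌊y'S⌋ := Int.le_floor.mpr hfloor
      have h2 : m ≤ (⌊y'S⌋ : ℝ) := by rw [← hmdef]; exact_mod_cast h1
      have h3 : Int.fract y'S = y'S - (⌊y'S⌋:ℝ) := rfl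
      linarith
    have hceil : ((⌈yS⌉:ℝ) - yS) ≤ 1 - s := by
      have h := Int.ceil_le_floor_add_one yS
      have h' : (⌈yS⌉:ℝ) ≤ m + 1 := by rw [← hmdef]; exact_mod_cast h
      linarith [hsm]
    have hceil0 : 0 ≤ (⌈yS⌉:ℝ) - yS := by linarith [Int.le_ceil yS]
    have hfr0' : 0 ≤ Int.fract y'S := Int.fract_nonneg _
    have prod : Int.fract y'S * ((⌈yS⌉:ℝ) - yS) ≤ (y'S - m) * (1 - s) :=
      mul_le_mul hfr' hceil hceil0 (by linarith)
    have hTu : T = u * y'S := by rw [← hTd]; exact hT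
    have hQ : (u:ℝ) * (Int.fract y'S * ((⌈yS⌉:ℝ) - yS)) ≤ (u:ℝ) * ((y'S - m) * (1 - s)) :=
      mul_le_mul_of_nonneg_left prod (le_of_lt hu0)
    have hR : (u:ℝ) * ((y'S - m) * (1 - s)) = (1 - s) * (T - m * u) := by rw [hTu]; ring
    have hS2 : (1 - s) * (T - m * u) ≤ s * (p1 - A1) + (1 - s) * (T - A1) := by nlinarith [hrect1]
    linarith [hQ, hR, hS2, hlow]
  -- combine
  have final : ((u:ℝ) * (Int.fract y'S * ((⌈yS⌉:ℝ) - yS))) * dA ≤ 4 * DS + (4 * (ℓ:ℝ) + 2) * D'S :=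
    le_trans (mul_le_mul_of_nonneg_right key2 hdA0) key1
  have hrw : 4 / (u:ℝ) * DS + (4 * (ℓ:ℝ) + 2) / (u:ℝ) * D'S
      = (4 * DS + (4 * (ℓ:ℝ) + 2) * D'S) / u := by ring
  rw [hrw, le_div_iff₀ hu0]
  linarith [final]
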